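/- arXiv:1706.01578 — 4 statements merged into one kernel-verified Lean document; each statement's English description precedes it below -/
import Mathlib

section
/- Normalization of the transition density p: for every t > 0 and every x ≥ 0, ∫_0^∞ p_t(x,y) dy = 1. -/
open MeasureTheory Real Finset

/-- Transition density `p_t(x,y)` of the auxiliary Markov process `X`. -/
noncomputable def transP (t x y : ℝ) : ℝ :=
  2 * t * Real.sqrt y / (Real.pi * ((y - x) ^ 2 + 2 * (x + y) * t ^ 2 + t ^ 4))

/-- The function `ℓ_t(y)`. -/
noncomputable def ellF (t y : ℝ) : ℝ :=
  if 0 < y then y * Real.exp (-(y ^ 2) / (2 * t)) / Real.sqrt (2 * Real.pi * t ^ 3) else 0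

/-- The function `g_t(y₁,y₂)`. -/
noncomputable def gF (t y₁ y₂ : ℝ) : ℝ :=
  if 0 < y₁ ∧ 0 < y₂ then
    (1 / Real.sqrt (2 * Real.pi * t)) *
      (Real.exp (-((y₁ - y₂) ^ 2) / (2 * t)) - Real.exp (-((y₁ + y₂) ^ 2) / (2 * t)))
  else 0

/-- The joint density `f_{t₁,…,t_{n+1}}(y₁,…,y_{n+1})` of the Brownian excursion
at `n+1` time points (indexed by `Fin (n+1)`). -/
noncomputable def excDensity (n : ℕ) (t y : Fin (n + 1) → ℝ) : ℝ :=
  Real.sqrt (8 * Real.pi) * ellF (t 0) (y 0) * ellF (1 - t (Fin.last n)) (y (Fin.last n)) *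
    ∏ k : Fin n, gF (t k.succ - t k.castSucc) (y k.castSucc) (y k.succ)

open Filter
lemma sqrt_tendsto_atTop : Tendsto Real.sqrt atTop atTop := by
  apply tendsto_atTop_atTop.2
  intro b
  refine ⟨b ^ 2, fun a ha => ?_⟩
  rcases le_or_gt b 0 with hb | hb
  · exact hb.trans (Real.sqrt_nonneg a)
  · calc b = Real.sqrt (b ^ 2) := (Real.sqrt_sq hb.le).symm
      _ ≤ Real.sqrt a := Real.sqrt_le_sqrt ha

lemma arctan_comp_tendsto {f : ℝ → ℝ} (hf : Tendsto f atTop atTop) :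
    Tendsto (fun y => Real.arctan (f y)) atTop (nhds (Real.pi / 2)) :=
  (tendsto_nhds_of_tendsto_nhdsWithin Real.tendsto_arctan_atTop).comp hf

noncomputable def F0 (t y : ℝ) : ℝ :=
  (2 / Real.pi) * Real.arctan (Real.sqrt y / t) - (2 * t / Real.pi) * (Real.sqrt y / (y + t ^ 2))

lemma F0_deriv (t : ℝ) (ht : 0 < t) {y : ℝ} (hy : 0 < y) :
    HasDerivAt (F0 t) (transP t 0 y) y := by
  have hs : 0 < Real.sqrt y := Real.sqrt_pos.2 hy
  have hsq : Real.sqrt y ^ 2 = y := Real.sq_sqrt hy.le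
  have hden : y + t ^ 2 ≠ 0 := by positivity
  have h1 : HasDerivAt Real.sqrt (1 / (2 * Real.sqrt y)) y := Real.hasDerivAt_sqrt hy.ne'
  have h2 : HasDerivAt (fun y => Real.arctan (Real.sqrt y / t))
      (1 / (1 + (Real.sqrt y / t) ^ 2) * (1 / (2 * Real.sqrt y) / t)) y :=
    (h1.div_const t).arctan
  have h3 : HasDerivAt (fun y : ℝ => y + t ^ 2) 1 y := (hasDerivAt_id y).add_const _
  have h4 : HasDerivAt (fun y => Real.sqrt y / (y + t ^ 2))
      ((1 / (2 * Real.sqrt y) * (y + t ^ 2) - Real.sqrt y * 1) / (y + t ^ 2) ^ 2) y :=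
    h1.div h3 hden
  have := ((h2.const_mul (2 / Real.pi)).sub (h4.const_mul (2 * t / Real.pi)))
  refine this.congr_deriv ?_
  unfold transP
  rw [← hsq, Real.sqrt_sq hs.le]
  have hπ := Real.pi_ne_zero
  field_simp
  ring

lemma F0_tendsto (t : ℝ) (ht : 0 < t) : Tendsto (F0 t) atTop (nhds 1) := by
  have h1 : Tendsto (fun y => Real.arctan (Real.sqrt y / t)) atTop (nhds (Real.pi / 2)) :=
    arctan_comp_tendsto (sqrt_tendsto_atTop.atTop_div_const ht)
  have h2 : Tendsto (fun y => Real.sqrt y / (y + t ^ 2)) atTop (nhds 0) := by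
    apply squeeze_zero' (g := fun y => 1 / Real.sqrt y)
    · filter_upwards [eventually_ge_atTop (0:ℝ)] with y hy
      positivity
    · filter_upwards [eventually_gt_atTop (0:ℝ)] with y hy
      rw [div_le_div_iff₀ (by positivity) (Real.sqrt_pos.2 hy)]
      nlinarith [Real.sq_sqrt hy.le, Real.sqrt_pos.2 hy]
    · exact tendsto_const_nhds.div_atTop sqrt_tendsto_atTop
  have := (h1.const_mul (2 / Real.pi)).sub (h2.const_mul (2 * t / Real.pi))
  unfold F0
  convert this using 2
  have hπ := Real.pi_ne_zero
  field_simp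
  ring

lemma F0_zero (t : ℝ) : F0 t 0 = 0 := by
  simp [F0]

lemma F0_cont (t : ℝ) (ht : 0 < t) : ContinuousWithinAt (F0 t) (Set.Ici 0) 0 := by
  apply ContinuousAt.continuousWithinAt
  apply ContinuousAt.sub
  · exact ContinuousAt.mul continuousAt_const
      ((Real.continuous_arctan.continuousAt).comp
        ((Real.continuous_sqrt.continuousAt).div continuousAt_const ht.ne'))
  · exact ContinuousAt.mul continuousAt_const
      ((Real.continuous_sqrt.continuousAt).div
        (continuousAt_id.add continuousAt_const) (by positivity))

noncomputable def F1 (t a y : ℝ) : ℝ :=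
  t / (2 * Real.pi * a) *
      (Real.log ((Real.sqrt y - a) ^ 2 + t ^ 2) - Real.log ((Real.sqrt y + a) ^ 2 + t ^ 2)) +
    (1 / Real.pi) * (Real.arctan ((Real.sqrt y - a) / t) + Real.arctan ((Real.sqrt y + a) / t))

lemma F1_deriv (t a : ℝ) (ht : 0 < t) (ha : 0 < a) {y : ℝ} (hy : 0 < y) :
    HasDerivAt (F1 t a) (transP t (a ^ 2) y) y := by
  have hs : 0 < Real.sqrt y := Real.sqrt_pos.2 hy
  have hsq : Real.sqrt y ^ 2 = y := Real.sq_sqrt hy.le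
  set s := Real.sqrt y with hs_def
  have hA : (0:ℝ) < (s - a) ^ 2 + t ^ 2 := by positivity
  have hB : (0:ℝ) < (s + a) ^ 2 + t ^ 2 := by positivity
  have h1 : HasDerivAt Real.sqrt (1 / (2 * s)) y := Real.hasDerivAt_sqrt hy.ne'
  have hAd : HasDerivAt (fun y => (Real.sqrt y - a) ^ 2 + t ^ 2)
      ((2:ℕ) * (s - a) ^ 1 * (1 / (2 * s))) y := ((h1.sub_const a).pow 2).add_const _
  have hBd : HasDerivAt (fun y => (Real.sqrt y + a) ^ 2 + t ^ 2)
      ((2:ℕ) * (s + a) ^ 1 * (1 / (2 * s))) y := ((h1.add_const a).pow 2).add_const _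
  have hlogA := hAd.log hA.ne'
  have hlogB := hBd.log hB.ne'
  have harctanA : HasDerivAt (fun y => Real.arctan ((Real.sqrt y - a) / t))
      (1 / (1 + ((s - a) / t) ^ 2) * (1 / (2 * s) / t)) y := ((h1.sub_const a).div_const t).arctan
  have harctanB : HasDerivAt (fun y => Real.arctan ((Real.sqrt y + a) / t))
      (1 / (1 + ((s + a) / t) ^ 2) * (1 / (2 * s) / t)) y := ((h1.add_const a).div_const t).arctan
  have hmain := ((hlogA.sub hlogB).const_mul (t / (2 * Real.pi * a))).add
    ((harctanA.add harctanB).const_mul (1 / Real.pi))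
  refine hmain.congr_deriv ?_
  unfold transP
  rw [← hsq, Real.sqrt_sq hs.le]
  have hπ := Real.pi_ne_zero
  have h1A : (1:ℝ) + ((s - a) / t) ^ 2 ≠ 0 := by positivity
  have h1B : (1:ℝ) + ((s + a) / t) ^ 2 ≠ 0 := by positivity
  have hprod : (s ^ 2 - a ^ 2) ^ 2 + 2 * (a ^ 2 + s ^ 2) * t ^ 2 + t ^ 4 =
      ((s - a) ^ 2 + t ^ 2) * ((s + a) ^ 2 + t ^ 2) := by ring
  rw [hprod]
  field_simp
  ring

lemma ratio_tendsto (t a : ℝ) (ht : 0 < t) (ha : 0 < a) :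
    Tendsto (fun s : ℝ => ((s - a) ^ 2 + t ^ 2) / ((s + a) ^ 2 + t ^ 2)) atTop (nhds 1) := by
  have h0 : Tendsto (fun s : ℝ => a / s) atTop (nhds 0) :=
    tendsto_const_nhds.div_atTop tendsto_id
  have h0' : Tendsto (fun s : ℝ => t / s) atTop (nhds 0) :=
    tendsto_const_nhds.div_atTop tendsto_id
  have hnum : Tendsto (fun s : ℝ => (1 - a / s) ^ 2 + (t / s) ^ 2) atTop (nhds 1) := by
    have := (((tendsto_const_nhds (x := (1:ℝ))).sub h0).pow 2).add (h0'.pow 2)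
    simpa using this
  have hden : Tendsto (fun s : ℝ => (1 + a / s) ^ 2 + (t / s) ^ 2) atTop (nhds 1) := by
    have := (((tendsto_const_nhds (x := (1:ℝ))).add h0).pow 2).add (h0'.pow 2)
    simpa using this
  have hlim : Tendsto (fun s : ℝ => ((1 - a / s) ^ 2 + (t / s) ^ 2) / ((1 + a / s) ^ 2 + (t / s) ^ 2))
      atTop (nhds 1) := by
    simpa [Pi.div_def] using hnum.div hden one_ne_zero
  apply hlim.congr'
  filter_upwards [eventually_gt_atTop (0:ℝ)] with s hs
  have hB : ((s + a) ^ 2 + t ^ 2 : ℝ) ≠ 0 := by positivity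
  field_simp

lemma F1_tendsto (t a : ℝ) (ht : 0 < t) (ha : 0 < a) :
    Tendsto (F1 t a) atTop (nhds 1) := by
  have hlog : Tendsto (fun y : ℝ =>
      Real.log ((Real.sqrt y - a) ^ 2 + t ^ 2) - Real.log ((Real.sqrt y + a) ^ 2 + t ^ 2))
      atTop (nhds 0) := by
    have hratio := (ratio_tendsto t a ht ha).comp sqrt_tendsto_atTop
    have hcont : Tendsto (fun r : ℝ => Real.log r) (nhds 1) (nhds 0) := by
      simpa using (Real.continuousAt_log one_ne_zero).tendsto
    have := hcont.comp hratio
    apply this.congr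
    intro y
    have hA : ((Real.sqrt y - a) ^ 2 + t ^ 2 : ℝ) ≠ 0 := by positivity
    have hB : ((Real.sqrt y + a) ^ 2 + t ^ 2 : ℝ) ≠ 0 := by positivity
    simp [Function.comp, Real.log_div hA hB]
  have harc1 : Tendsto (fun y : ℝ => Real.arctan ((Real.sqrt y - a) / t)) atTop
      (nhds (Real.pi / 2)) :=
    arctan_comp_tendsto (((tendsto_atTop_add_const_right _ (-a) sqrt_tendsto_atTop).congr
      (fun y => by ring_nf)).atTop_div_const ht)
  have harc2 : Tendsto (fun y : ℝ => Real.arctan ((Real.sqrt y + a) / t)) atTop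
      (nhds (Real.pi / 2)) :=
    arctan_comp_tendsto ((tendsto_atTop_add_const_right _ a sqrt_tendsto_atTop).atTop_div_const ht)
  have := (hlog.const_mul (t / (2 * Real.pi * a))).add ((harc1.add harc2).const_mul (1 / Real.pi))
  have hπ := Real.pi_ne_zero
  unfold F1
  convert this using 2
  field_simp
  ring

lemma F1_zero (t a : ℝ) : F1 t a 0 = 0 := by
  unfold F1
  rw [Real.sqrt_zero]
  have h1 : ((0:ℝ) - a) ^ 2 = (0 + a) ^ 2 := by ring
  have h2 : ((0:ℝ) - a) / t = -((0 + a) / t) := by ring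
  rw [h1, h2, Real.arctan_neg]
  ring

lemma F1_cont (t a : ℝ) (ht : 0 < t) : ContinuousWithinAt (F1 t a) (Set.Ici 0) 0 := by
  apply ContinuousAt.continuousWithinAt
  have hsq : ContinuousAt Real.sqrt 0 := Real.continuous_sqrt.continuousAt
  have hA : ContinuousAt (fun y => (Real.sqrt y - a) ^ 2 + t ^ 2) 0 :=
    (((hsq.sub continuousAt_const).pow 2).add continuousAt_const)
  have hB : ContinuousAt (fun y => (Real.sqrt y + a) ^ 2 + t ^ 2) 0 :=
    (((hsq.add continuousAt_const).pow 2).add continuousAt_const)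
  have hAne : ((Real.sqrt 0 - a) ^ 2 + t ^ 2 : ℝ) ≠ 0 := by positivity
  have hBne : ((Real.sqrt 0 + a) ^ 2 + t ^ 2 : ℝ) ≠ 0 := by positivity
  exact (continuousAt_const.mul ((hA.log hAne).sub (hB.log hBne))).add
    (continuousAt_const.mul
      ((Real.continuous_arctan.continuousAt.comp ((hsq.sub continuousAt_const).div
          continuousAt_const ht.ne')).add
        (Real.continuous_arctan.continuousAt.comp ((hsq.add continuousAt_const).div
          continuousAt_const ht.ne'))))

/-- **Normalization of the transition density `p`:** for `t > 0` and `x ≥ 0`,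
`∫_0^∞ p_t(x,y) dy = 1`. -/
theorem transP_integral_eq_one (t x : ℝ) (ht : 0 < t) (hx : 0 ≤ x) :
    ∫ y in Set.Ioi (0 : ℝ), transP t x y = 1 := by
  have hnonneg : ∀ y ∈ Set.Ioi (0:ℝ), 0 ≤ transP t x y := by
    intro y hy
    have hy0 : (0:ℝ) < y := hy
    have hden : (0:ℝ) < (y - x) ^ 2 + 2 * (x + y) * t ^ 2 + t ^ 4 := by
      nlinarith [sq_nonneg (y - x), sq_nonneg t, pow_pos ht 4, pow_pos ht 2]
    exact div_nonneg (by positivity) (mul_pos Real.pi_pos hden).le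
  rcases eq_or_lt_of_le hx with hx0 | hx0
  · subst hx0
    rw [integral_Ioi_of_hasDerivAt_of_nonneg (F0_cont t ht)
      (fun y hy => F0_deriv t ht hy) hnonneg (F0_tendsto t ht), F0_zero, sub_zero]
  · set a := Real.sqrt x with ha_def
    have ha : 0 < a := Real.sqrt_pos.2 hx0
    have hax : a ^ 2 = x := Real.sq_sqrt hx
    have hderiv : ∀ y ∈ Set.Ioi (0:ℝ), HasDerivAt (F1 t a) (transP t x y) y := by
      intro y hy
      rw [← hax]
      exact F1_deriv t a ht ha hy
    rw [integral_Ioi_of_hasDerivAt_of_nonneg (F1_cont t a ht) hderiv hnonneg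
      (F1_tendsto t a ht ha), F1_zero, sub_zero]
end

section
/- Stationarity of the σ-finite measure √x dx for the transition density p: for every s > 0 and every y > 0, ∫_0^∞ √x · p_s(x,y) dx = √y. -/
open MeasureTheory Real Finset Filter Topology

/-- **Stationarity of the σ-finite measure `√x dx`** for the transition density `p`:
for `s > 0` and `y > 0`, `∫_0^∞ √x · p_s(x,y) dx = √y`. -/
theorem transP_stationary (s y : ℝ) (hs : 0 < s) (hy : 0 < y) :
    ∫ x in Set.Ioi (0 : ℝ), Real.sqrt x * transP s x y = Real.sqrt y := by
  have hπ : 0 < Real.pi := Real.pi_pos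
  set v := Real.sqrt y with hv
  have hv0 : 0 < v := Real.sqrt_pos.mpr hy
  have hv2 : v ^ 2 = y := Real.sq_sqrt hy.le
  set F : ℝ → ℝ := fun x =>
    s / (2 * Real.pi) * (Real.log ((Real.sqrt x - v) ^ 2 + s ^ 2)
        - Real.log ((Real.sqrt x + v) ^ 2 + s ^ 2)) +
    v / Real.pi * (Real.arctan ((Real.sqrt x - v) / s)
        + Real.arctan ((Real.sqrt x + v) / s)) with hF
  have hderiv : ∀ x ∈ Set.Ioi (0:ℝ), HasDerivAt F (Real.sqrt x * transP s x y) x := by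
    intro x hx
    have hx0 : (0:ℝ) < x := hx
    have hu0 : 0 < Real.sqrt x := Real.sqrt_pos.mpr hx0
    have hu2 : Real.sqrt x ^ 2 = x := Real.sq_sqrt hx0.le
    have h1 : HasDerivAt Real.sqrt (1 / (2 * Real.sqrt x)) x := Real.hasDerivAt_sqrt hx0.ne'
    have hAd : HasDerivAt (fun t => (Real.sqrt t - v) ^ 2 + s ^ 2)
        (2 * (Real.sqrt x - v) ^ 1 * (1 / (2 * Real.sqrt x))) x :=
      ((h1.sub_const v).pow 2).add_const _
    have hBd : HasDerivAt (fun t => (Real.sqrt t + v) ^ 2 + s ^ 2)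
        (2 * (Real.sqrt x + v) ^ 1 * (1 / (2 * Real.sqrt x))) x :=
      ((h1.add_const v).pow 2).add_const _
    have hApos : 0 < (Real.sqrt x - v) ^ 2 + s ^ 2 := by positivity
    have hBpos : 0 < (Real.sqrt x + v) ^ 2 + s ^ 2 := by positivity
    have hlog := ((hAd.log hApos.ne').sub (hBd.log hBpos.ne')).const_mul (s / (2 * Real.pi))
    have ha1 : HasDerivAt (fun t => (Real.sqrt t - v) / s) ((1 / (2 * Real.sqrt x)) / s) x :=
      (h1.sub_const v).div_const s
    have ha2 : HasDerivAt (fun t => (Real.sqrt t + v) / s) ((1 / (2 * Real.sqrt x)) / s) x :=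
      (h1.add_const v).div_const s
    have harc := (ha1.arctan.add ha2.arctan).const_mul (v / Real.pi)
    have hcomb := hlog.add harc
    refine hcomb.congr_deriv (Eq.symm ?_)
    rw [transP, ← hv]
    set u := Real.sqrt x with hu
    rw [show x = u ^ 2 from hu2.symm, show y = v ^ 2 from hv2.symm]
    have hApos' : (0:ℝ) < (u - v) ^ 2 + s ^ 2 := by positivity
    have hBpos' : (0:ℝ) < (u + v) ^ 2 + s ^ 2 := by positivity
    have hD : (v ^ 2 - u ^ 2) ^ 2 + 2 * (u ^ 2 + v ^ 2) * s ^ 2 + s ^ 4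
        = ((u - v) ^ 2 + s ^ 2) * ((u + v) ^ 2 + s ^ 2) := by ring
    rw [hD]
    have hs1 : 1 + ((u - v) / s) ^ 2 = ((u - v) ^ 2 + s ^ 2) / s ^ 2 := by
      field_simp; ring
    have hs2 : 1 + ((u + v) / s) ^ 2 = ((u + v) ^ 2 + s ^ 2) / s ^ 2 := by
      field_simp; ring
    rw [hs1, hs2]
    field_simp
    ring
  have hnonneg : ∀ x ∈ Set.Ioi (0:ℝ), 0 ≤ Real.sqrt x * transP s x y := by
    intro x hx
    have hx0 : (0:ℝ) < x := hx
    have h2 : 0 ≤ transP s x y := by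
      rw [transP]
      have : 0 < (y - x) ^ 2 + 2 * (x + y) * s ^ 2 + s ^ 4 := by positivity
      positivity
    positivity
  have hcont : ContinuousWithinAt F (Set.Ici 0) 0 := by
    apply Continuous.continuousWithinAt
    have hc1 : Continuous fun x : ℝ => Real.log ((Real.sqrt x - v) ^ 2 + s ^ 2) :=
      (((Real.continuous_sqrt.sub continuous_const).pow 2).add continuous_const).log
        fun x => (add_pos_of_nonneg_of_pos (sq_nonneg _) (pow_pos hs 2)).ne'
    have hc2 : Continuous fun x : ℝ => Real.log ((Real.sqrt x + v) ^ 2 + s ^ 2) :=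
      (((Real.continuous_sqrt.add continuous_const).pow 2).add continuous_const).log
        fun x => (add_pos_of_nonneg_of_pos (sq_nonneg _) (pow_pos hs 2)).ne'
    have hc3 : Continuous fun x : ℝ => Real.arctan ((Real.sqrt x - v) / s) :=
      Real.continuous_arctan.comp ((Real.continuous_sqrt.sub continuous_const).div_const s)
    have hc4 : Continuous fun x : ℝ => Real.arctan ((Real.sqrt x + v) / s) :=
      Real.continuous_arctan.comp ((Real.continuous_sqrt.add continuous_const).div_const s)
    exact (continuous_const.mul (hc1.sub hc2)).add (continuous_const.mul (hc3.add hc4))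
  have hF0 : F 0 = 0 := by
    simp only [hF, Real.sqrt_zero, zero_sub, zero_add, neg_sq]
    rw [show (-v) / s = -(v / s) by ring, Real.arctan_neg]
    ring
  have hsq : Tendsto Real.sqrt atTop atTop := by
    apply tendsto_atTop_atTop.2
    intro b
    refine ⟨max 0 b ^ 2, fun a ha => ?_⟩
    calc b ≤ max 0 b := le_max_right _ _
      _ = Real.sqrt (max 0 b ^ 2) := (Real.sqrt_sq (le_max_left _ _)).symm
      _ ≤ Real.sqrt a := Real.sqrt_le_sqrt ha
  have htend : Tendsto F atTop (𝓝 v) := by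
    have hin1 : Tendsto (fun x : ℝ => (Real.sqrt x - v) / s) atTop atTop := by
      have := (tendsto_atTop_add_const_right atTop (-v) hsq).atTop_div_const hs
      refine this.congr fun x => by ring
    have hin2 : Tendsto (fun x : ℝ => (Real.sqrt x + v) / s) atTop atTop :=
      (tendsto_atTop_add_const_right atTop v hsq).atTop_div_const hs
    have harc1 : Tendsto (fun x : ℝ => Real.arctan ((Real.sqrt x - v) / s)) atTop
        (𝓝 (Real.pi / 2)) :=
      (Real.tendsto_arctan_atTop.mono_right nhdsWithin_le_nhds).comp hin1
    have harc2 : Tendsto (fun x : ℝ => Real.arctan ((Real.sqrt x + v) / s)) atTop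
        (𝓝 (Real.pi / 2)) :=
      (Real.tendsto_arctan_atTop.mono_right nhdsWithin_le_nhds).comp hin2
    have hlogtend : Tendsto (fun x : ℝ =>
        Real.log ((Real.sqrt x - v) ^ 2 + s ^ 2) - Real.log ((Real.sqrt x + v) ^ 2 + s ^ 2))
        atTop (𝓝 0) := by
      have hratio : Tendsto (fun u : ℝ =>
          ((u - v) ^ 2 + s ^ 2) / ((u + v) ^ 2 + s ^ 2)) atTop (𝓝 1) := by
        have hv' : Tendsto (fun u : ℝ => v / u) atTop (𝓝 0) :=
          tendsto_const_nhds.div_atTop tendsto_id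
        have hs' : Tendsto (fun u : ℝ => s / u) atTop (𝓝 0) :=
          tendsto_const_nhds.div_atTop tendsto_id
        have hn : Tendsto (fun u : ℝ => (1 - v / u) ^ 2 + (s / u) ^ 2) atTop
            (𝓝 (((1:ℝ) - 0) ^ 2 + 0 ^ 2)) :=
          ((tendsto_const_nhds.sub hv').pow 2).add (hs'.pow 2)
        have hd : Tendsto (fun u : ℝ => (1 + v / u) ^ 2 + (s / u) ^ 2) atTop
            (𝓝 (((1:ℝ) + 0) ^ 2 + 0 ^ 2)) :=
          ((tendsto_const_nhds.add hv').pow 2).add (hs'.pow 2)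
        have h1 : Tendsto (fun u : ℝ => ((1 - v / u) ^ 2 + (s / u) ^ 2)
            / ((1 + v / u) ^ 2 + (s / u) ^ 2)) atTop (𝓝 1) := by
          have := hn.div hd (by norm_num)
          simp at this; exact this
        refine h1.congr' ?_
        filter_upwards [eventually_gt_atTop (0:ℝ)] with u hu
        have hB : (0:ℝ) < (u + v) ^ 2 + s ^ 2 := by positivity
        have hB2 : (0:ℝ) < (1 + v / u) ^ 2 + (s / u) ^ 2 := by
          have : (1 + v / u) ^ 2 + (s / u) ^ 2 = ((u + v) ^ 2 + s ^ 2) / u ^ 2 := by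
            field_simp <;> ring
          rw [this]; positivity
        field_simp <;> ring
      have hlog1 : Tendsto (fun u : ℝ =>
          Real.log (((u - v) ^ 2 + s ^ 2) / ((u + v) ^ 2 + s ^ 2))) atTop (𝓝 0) := by
        have := (Real.continuousAt_log (by norm_num : (1:ℝ) ≠ 0)).tendsto.comp hratio
        simp at this; exact this
      have heq : ∀ u : ℝ, Real.log (((u - v) ^ 2 + s ^ 2) / ((u + v) ^ 2 + s ^ 2))
          = Real.log ((u - v) ^ 2 + s ^ 2) - Real.log ((u + v) ^ 2 + s ^ 2) := by
        intro u
        have h1 : (0:ℝ) < (u - v) ^ 2 + s ^ 2 := by positivity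
        have h2 : (0:ℝ) < (u + v) ^ 2 + s ^ 2 := by positivity
        rw [Real.log_div h1.ne' h2.ne']
      exact (hlog1.congr fun u => heq u).comp hsq
    have hfin : Tendsto F atTop (𝓝 (s / (2 * Real.pi) * 0
        + v / Real.pi * (Real.pi / 2 + Real.pi / 2))) :=
      (hlogtend.const_mul _).add ((harc1.add harc2).const_mul _)
    convert hfin using 2
    field_simp
    ring
  rw [integral_Ioi_of_hasDerivAt_of_nonneg hcont hderiv hnonneg htend, hF0, sub_zero]
end

section
/- Sine-transform representation of the transition density at squared arguments: for every s > 0, every x > 0 and every y ≥ 0, p_s(x², y²) = (1/(πx)) · ∫_0^∞ e^{−sz} · sin(xz) · sin(yz) dz. -/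
open MeasureTheory Real Finset

lemma exp_cos_integrableOn (s a : ℝ) (hs : 0 < s) :
    IntegrableOn (fun z => Real.exp (-(s * z)) * Real.cos (a * z)) (Set.Ioi (0:ℝ)) := by
  have h := exp_neg_integrableOn_Ioi 0 hs
  refine h.mono' ?_ ?_
  · exact (Real.continuous_exp.comp (continuous_const.mul continuous_id).neg).mul
      (Real.continuous_cos.comp (continuous_const.mul continuous_id)) |>.aestronglyMeasurable
  · filter_upwards with z
    rw [norm_mul, Real.norm_eq_abs, Real.norm_eq_abs, abs_of_pos (Real.exp_pos _),
      show -s * z = -(s * z) by ring]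
    calc Real.exp (-(s * z)) * |Real.cos (a * z)| ≤ Real.exp (-(s * z)) * 1 :=
          mul_le_mul_of_nonneg_left (Real.abs_cos_le_one _) (Real.exp_pos _).le
      _ = Real.exp (-(s * z)) := mul_one _

lemma laplace_cos (s a : ℝ) (hs : 0 < s) :
    ∫ z in Set.Ioi (0:ℝ), Real.exp (-(s * z)) * Real.cos (a * z)
      = s / (s ^ 2 + a ^ 2) := by
  have hd : (0:ℝ) < s ^ 2 + a ^ 2 := by positivity
  set F : ℝ → ℝ := fun z =>
    Real.exp (-(s * z)) * (a * Real.sin (a * z) - s * Real.cos (a * z)) / (s ^ 2 + a ^ 2)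
    with hF
  have hderiv : ∀ z ∈ Set.Ici (0:ℝ),
      HasDerivAt F (Real.exp (-(s * z)) * Real.cos (a * z)) z := by
    intro z _
    have h1 : HasDerivAt (fun z => Real.exp (-(s * z))) (-s * Real.exp (-(s * z))) z := by
      have := (Real.hasDerivAt_exp (-(s * z))).comp z
        (((hasDerivAt_id z).const_mul s).neg)
      exact (show HasDerivAt (fun z => Real.exp (-(s * z))) _ z from this).congr_deriv (by ring)
    have h2 : HasDerivAt (fun z => a * Real.sin (a * z) - s * Real.cos (a * z))
        (a * (a * Real.cos (a * z)) - s * (-(a * Real.sin (a * z)))) z := by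
      have hin : HasDerivAt (fun z : ℝ => a * z) a z := by
        simpa using (hasDerivAt_id z).const_mul a
      have hs1 : HasDerivAt (fun z => Real.sin (a * z)) (Real.cos (a * z) * a) z :=
        (Real.hasDerivAt_sin (a * z)).comp z hin
      have hc1 : HasDerivAt (fun z => Real.cos (a * z)) (-Real.sin (a * z) * a) z :=
        (Real.hasDerivAt_cos (a * z)).comp z hin
      have := ((hs1.const_mul a).sub (hc1.const_mul s))
      exact (show HasDerivAt (fun z => a * Real.sin (a * z) - s * Real.cos (a * z)) _ z from this).congr_deriv (by ring)
    have := (h1.mul h2).div_const (s ^ 2 + a ^ 2)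
    exact (show HasDerivAt F _ z from this).congr_deriv (by
      field_simp
      ring)
  have hint := exp_cos_integrableOn s a hs
  have hlim : Filter.Tendsto F Filter.atTop (nhds 0) := by
    have hb : Filter.Tendsto (fun z => Real.exp (-(s * z))) Filter.atTop (nhds 0) := by
      have h0 : Filter.Tendsto (fun z : ℝ => s * z) Filter.atTop Filter.atTop :=
        Filter.Tendsto.const_mul_atTop hs Filter.tendsto_id
      exact Real.tendsto_exp_neg_atTop_nhds_zero.comp h0
    have hbd : ∀ z : ℝ, |F z| ≤ Real.exp (-(s * z)) * ((|a| + |s|) / (s ^ 2 + a ^ 2)) := by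
      intro z
      rw [hF]
      rw [abs_div, abs_of_pos hd, div_le_iff₀ hd] at *
      rw [abs_mul, abs_of_pos (Real.exp_pos _)]
      have : |a * Real.sin (a * z) - s * Real.cos (a * z)| ≤ |a| + |s| := by
        calc |a * Real.sin (a * z) - s * Real.cos (a * z)|
            ≤ |a * Real.sin (a * z)| + |s * Real.cos (a * z)| := abs_sub _ _
          _ ≤ |a| * 1 + |s| * 1 := by
              rw [abs_mul, abs_mul]
              gcongr
              exacts [Real.abs_sin_le_one _, Real.abs_cos_le_one _]
          _ = |a| + |s| := by ring
      calc Real.exp (-(s * z)) * |a * Real.sin (a * z) - s * Real.cos (a * z)|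
          ≤ Real.exp (-(s * z)) * (|a| + |s|) :=
            mul_le_mul_of_nonneg_left this (Real.exp_pos _).le
        _ = Real.exp (-(s * z)) * ((|a| + |s|) / (s ^ 2 + a ^ 2)) * (s ^ 2 + a ^ 2) := by
            field_simp
    have hb' : Filter.Tendsto (fun z => Real.exp (-(s * z)) * ((|a| + |s|) / (s ^ 2 + a ^ 2)))
        Filter.atTop (nhds 0) := by
      simpa using hb.mul_const ((|a| + |s|) / (s ^ 2 + a ^ 2))
    have hb'' : Filter.Tendsto (fun z => -(Real.exp (-(s * z)) * ((|a| + |s|) / (s ^ 2 + a ^ 2))))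
        Filter.atTop (nhds 0) := by simpa using hb'.neg
    refine squeeze_zero_norm' ?_ hb'
    filter_upwards with z using hbd z
  have := integral_Ioi_of_hasDerivAt_of_tendsto' hderiv hint hlim
  rw [this, hF]
  simp only [mul_zero, neg_zero, Real.exp_zero, Real.sin_zero, Real.cos_zero, zero_sub]
  ring

/-- **Sine-transform representation** of the transition density at squared arguments:
for `s > 0`, `x > 0`, `y ≥ 0`,
`p_s(x², y²) = (1/(πx)) · ∫_0^∞ e^{−sz} sin(xz) sin(yz) dz`. -/
theorem transP_sq_sine_transform (s x y : ℝ) (hs : 0 < s) (hx : 0 < x) (hy : 0 ≤ y) :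
    transP s (x ^ 2) (y ^ 2) =
      (1 / (Real.pi * x)) *
        ∫ z in Set.Ioi (0 : ℝ), Real.exp (-(s * z)) * Real.sin (x * z) * Real.sin (y * z) := by
  have hprod : ∀ z : ℝ, Real.exp (-(s * z)) * Real.sin (x * z) * Real.sin (y * z)
      = (Real.exp (-(s * z)) * Real.cos ((x - y) * z)
          - Real.exp (-(s * z)) * Real.cos ((x + y) * z)) / 2 := by
    intro z
    have : Real.cos ((x - y) * z) - Real.cos ((x + y) * z)
        = 2 * Real.sin (x * z) * Real.sin (y * z) := by
      rw [sub_mul, add_mul, Real.cos_sub, Real.cos_add]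
      ring
    linear_combination (-Real.exp (-(s * z)) / 2) * this
  have hI : ∫ z in Set.Ioi (0 : ℝ), Real.exp (-(s * z)) * Real.sin (x * z) * Real.sin (y * z)
      = (s / (s ^ 2 + (x - y) ^ 2) - s / (s ^ 2 + (x + y) ^ 2)) / 2 := by
    rw [show (fun z => Real.exp (-(s * z)) * Real.sin (x * z) * Real.sin (y * z))
        = fun z => (Real.exp (-(s * z)) * Real.cos ((x - y) * z)
          - Real.exp (-(s * z)) * Real.cos ((x + y) * z)) / 2 from funext hprod]
    rw [integral_div, integral_sub (exp_cos_integrableOn s (x - y) hs)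
      (exp_cos_integrableOn s (x + y) hs),
      laplace_cos s (x - y) hs, laplace_cos s (x + y) hs]
  rw [hI, transP, Real.sqrt_sq hy]
  have h1 : (0:ℝ) < s ^ 2 + (x - y) ^ 2 := by positivity
  have h2 : (0:ℝ) < s ^ 2 + (x + y) ^ 2 := by positivity
  have hD : (y ^ 2 - x ^ 2) ^ 2 + 2 * (x ^ 2 + y ^ 2) * s ^ 2 + s ^ 4
      = (s ^ 2 + (x - y) ^ 2) * (s ^ 2 + (x + y) ^ 2) := by ring
  rw [hD]
  have hpi := Real.pi_pos
  field_simp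
  ring
end

section
/- Explicit weight for the Beta(δ/2, (3−δ)/2) mixture: for every δ ∈ (0,3) and every x > 0, (√x · e^{x/2} / √(2π)) · (1/B(δ/2, (3−δ)/2)) · ∫_0^1 e^{−x/(2v)} · v^{−3/2} · v^{δ/2 − 1} · (1−v)^{(1−δ)/2} dv = x^{δ/2 − 1} / (2^{δ/2} · Γ(δ/2)), where B(α,β) = Γ(α)Γ(β)/Γ(α+β). -/
open MeasureTheory Real

lemma aux_image : (fun u : ℝ => (1 + u)⁻¹) '' Set.Ioi 0 = Set.Ioo 0 1 := by
  ext v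
  constructor
  · rintro ⟨u, hu, rfl⟩
    simp only [Set.mem_Ioi] at hu
    refine ⟨by positivity, ?_⟩
    rw [inv_lt_one_iff₀]; right; linarith
  · rintro ⟨hv0, hv1⟩
    refine ⟨1 / v - 1, ?_, ?_⟩
    · simp only [Set.mem_Ioi, sub_pos]
      rw [lt_div_iff₀ hv0]; linarith
    · field_simp
      ring

lemma aux_integral (δ x : ℝ) (hδ3 : δ < 3) (hx : 0 < x) :
    (∫ v in Set.Ioo (0 : ℝ) 1,
        Real.exp (-x / (2 * v)) * v ^ (-(3 : ℝ) / 2) * v ^ (δ / 2 - 1) *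
          (1 - v) ^ ((1 - δ) / 2)) =
      Real.exp (-x / 2) * (2 / x) ^ ((3 - δ) / 2) * Real.Gamma ((3 - δ) / 2) := by
  have hderiv : ∀ u ∈ Set.Ioi (0 : ℝ),
      HasDerivWithinAt (fun u : ℝ => (1 + u)⁻¹) (-(((1 + u) ^ 2)⁻¹)) (Set.Ioi 0) u := by
    intro u hu
    simp only [Set.mem_Ioi] at hu
    have h1 : (1 + u) ≠ 0 := by positivity
    have h : HasDerivAt (fun u : ℝ => (1 + u)⁻¹) (-(((1 + u) ^ 2)⁻¹)) u := by
      simpa [neg_div, one_div] using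
        ((hasDerivAt_const u (1:ℝ)).add (hasDerivAt_id u)).fun_inv h1
    exact h.hasDerivWithinAt
  have hinj : Set.InjOn (fun u : ℝ => (1 + u)⁻¹) (Set.Ioi 0) := by
    intro a ha b hb hab
    simp only [Set.mem_Ioi] at ha hb
    simp only at hab
    have h1 : (1 + a) ≠ 0 := by positivity
    have h2 : (1 + b) ≠ 0 := by positivity
    field_simp at hab
    linarith
  have key := integral_image_eq_integral_abs_deriv_smul measurableSet_Ioi hderiv hinj
    (fun v => Real.exp (-x / (2 * v)) * v ^ (-(3 : ℝ) / 2) * v ^ (δ / 2 - 1) *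
          (1 - v) ^ ((1 - δ) / 2))
  rw [aux_image] at key
  rw [key]
  have heq : ∀ u ∈ Set.Ioi (0 : ℝ),
      |(-(((1 + u) ^ 2)⁻¹))| • (Real.exp (-x / (2 * (1 + u)⁻¹)) * ((1 + u)⁻¹) ^ (-(3 : ℝ) / 2) *
          ((1 + u)⁻¹) ^ (δ / 2 - 1) * (1 - (1 + u)⁻¹) ^ ((1 - δ) / 2)) =
        Real.exp (-x / 2) * (u ^ ((3 - δ) / 2 - 1) * Real.exp (-(x / 2 * u))) := by
    intro u hu
    simp only [Set.mem_Ioi] at hu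
    have h1 : (0:ℝ) < 1 + u := by linarith
    have e1 : Real.exp (-x / (2 * (1 + u)⁻¹)) = Real.exp (-x / 2) * Real.exp (-(x / 2 * u)) := by
      rw [← Real.exp_add]
      congr 1
      have h1' : (1 + u) ≠ 0 := ne_of_gt h1
      field_simp
      ring
    have e2 : ((1 + u)⁻¹) ^ (-(3 : ℝ) / 2) = (1 + u) ^ ((3 : ℝ) / 2) := by
      rw [Real.inv_rpow h1.le, ← Real.rpow_neg h1.le]
      norm_num
    have e3 : ((1 + u)⁻¹) ^ (δ / 2 - 1) = (1 + u) ^ (1 - δ / 2) := by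
      rw [Real.inv_rpow h1.le, ← Real.rpow_neg h1.le]
      congr 1; ring
    have e4 : (1 : ℝ) - (1 + u)⁻¹ = u / (1 + u) := by
      field_simp
      ring
    have e6 : ((1 + u) : ℝ) ^ (2 : ℕ) = (1 + u) ^ ((2 : ℝ)) := by
      rw [← Real.rpow_natCast (1 + u) 2]; norm_num
    have epow : (1 + u) ^ ((3:ℝ)/2) * (1 + u) ^ (1 - δ/2) / (1 + u) ^ ((1 - δ)/2) *
        ((1 + u) ^ ((2:ℝ)))⁻¹ = 1 := by
      rw [← Real.rpow_neg h1.le, ← Real.rpow_add h1, ← Real.rpow_sub h1, ← Real.rpow_add h1,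
        show (3:ℝ)/2 + (1 - δ/2) - (1 - δ)/2 + -2 = 0 by ring, Real.rpow_zero]
    rw [smul_eq_mul, abs_neg, abs_inv, abs_of_pos (by positivity), e1, e2, e3, e4,
      Real.div_rpow hu.le h1.le, e6, show (3 - δ) / 2 - 1 = (1 - δ) / 2 by ring]
    calc ((1 + u) ^ ((2:ℝ)))⁻¹ *
          (Real.exp (-x / 2) * Real.exp (-(x / 2 * u)) * (1 + u) ^ ((3:ℝ)/2) *
            (1 + u) ^ (1 - δ/2) * (u ^ ((1 - δ)/2) / (1 + u) ^ ((1 - δ)/2)))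
        = Real.exp (-x / 2) * (u ^ ((1 - δ)/2) * Real.exp (-(x / 2 * u))) *
          ((1 + u) ^ ((3:ℝ)/2) * (1 + u) ^ (1 - δ/2) / (1 + u) ^ ((1 - δ)/2) *
            ((1 + u) ^ ((2:ℝ)))⁻¹) := by ring
      _ = Real.exp (-x / 2) * (u ^ ((1 - δ)/2) * Real.exp (-(x / 2 * u))) := by
          rw [epow, mul_one]
  rw [setIntegral_congr_fun measurableSet_Ioi heq, integral_const_mul,
    integral_rpow_mul_exp_neg_mul_Ioi (by linarith) (by positivity),
    show (1 / (x / 2)) = 2 / x by ring]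
  ring

/-- **Explicit weight for the `Beta(δ/2, (3−δ)/2)` mixture:** for `δ ∈ (0,3)` and `x > 0`,
`(√x e^{x/2}/√(2π)) · (1/B(δ/2,(3−δ)/2)) · ∫_0^1 e^{−x/(2v)} v^{−3/2} v^{δ/2−1} (1−v)^{(1−δ)/2} dv
  = x^{δ/2−1}/(2^{δ/2} Γ(δ/2))`, where `B(α,β) = Γ(α)Γ(β)/Γ(α+β)`. -/
theorem bessel_meander_weight (δ x : ℝ) (hδ0 : 0 < δ) (hδ3 : δ < 3) (hx : 0 < x) :
    (Real.sqrt x * Real.exp (x / 2) / Real.sqrt (2 * Real.pi)) *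
        (1 / (Real.Gamma (δ / 2) * Real.Gamma ((3 - δ) / 2) /
          Real.Gamma (δ / 2 + (3 - δ) / 2))) *
        ∫ v in Set.Ioo (0 : ℝ) 1,
          Real.exp (-x / (2 * v)) * v ^ (-(3 : ℝ) / 2) * v ^ (δ / 2 - 1) *
            (1 - v) ^ ((1 - δ) / 2) =
      x ^ (δ / 2 - 1) / ((2 : ℝ) ^ (δ / 2) * Real.Gamma (δ / 2)) := by
  rw [aux_integral δ x hδ3 hx, show δ / 2 + (3 - δ) / 2 = 3 / 2 by ring]
  have hG32 : Real.Gamma (3 / 2) = Real.sqrt Real.pi / 2 := by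
    have h := Real.Gamma_add_one (s := 1/2) (by norm_num)
    rw [show (1:ℝ)/2 + 1 = 3/2 by ring] at h
    rw [h, Real.Gamma_one_half_eq]; ring
  rw [hG32]
  have hG3δ : Real.Gamma ((3 - δ) / 2) ≠ 0 :=
    ne_of_gt (Real.Gamma_pos_of_pos (by linarith))
  have hexp : Real.exp (x / 2) * Real.exp (-x / 2) = 1 := by
    rw [← Real.exp_add, show x / 2 + -x / 2 = 0 by ring, Real.exp_zero]
  have hpow : Real.sqrt x * (2 / x) ^ ((3 - δ) / 2) =
      x ^ (δ / 2 - 1) * 2 ^ ((3 - δ) / 2) := by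
    rw [Real.div_rpow (by norm_num) hx.le, Real.sqrt_eq_rpow,
      show x ^ ((1:ℝ)/2) * ((2:ℝ) ^ ((3 - δ) / 2) / x ^ ((3 - δ) / 2)) =
        (x ^ ((1:ℝ)/2) / x ^ ((3 - δ) / 2)) * 2 ^ ((3 - δ) / 2) by ring,
      ← Real.rpow_sub hx, show (1:ℝ)/2 - (3 - δ)/2 = δ/2 - 1 by ring]
  have h2 : (2:ℝ) ^ ((3 - δ) / 2) * (Real.sqrt Real.pi / 2 / Real.sqrt (2 * Real.pi)) =
      1 / 2 ^ (δ / 2) := by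
    have hπ : (0:ℝ) < Real.sqrt Real.pi := Real.sqrt_pos.mpr Real.pi_pos
    rw [Real.sqrt_mul (by norm_num) Real.pi, Real.sqrt_eq_rpow 2,
      show (2:ℝ) ^ ((3 - δ)/2) *
          (Real.sqrt Real.pi / 2 / ((2:ℝ) ^ ((1:ℝ)/2) * Real.sqrt Real.pi)) =
        ((2:ℝ) ^ ((3 - δ)/2) / (2:ℝ) ^ ((1:ℝ)/2) / 2) *
          (Real.sqrt Real.pi / Real.sqrt Real.pi) by ring,
      div_self hπ.ne', mul_one, ← Real.rpow_sub (by norm_num),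
      show (3 - δ)/2 - (1:ℝ)/2 = 1 + -(δ/2) by ring, Real.rpow_add (by norm_num),
      Real.rpow_one, Real.rpow_neg (by norm_num)]
    ring
  calc _
      = (Real.exp (x / 2) * Real.exp (-x / 2)) *
        (Real.Gamma ((3 - δ) / 2) / Real.Gamma ((3 - δ) / 2)) *
        ((Real.sqrt x * (2 / x) ^ ((3 - δ) / 2)) *
          (Real.sqrt Real.pi / 2 / Real.sqrt (2 * Real.pi)) / Real.Gamma (δ / 2)) := by
        rw [one_div_div]; ring
    _ = (x ^ (δ / 2 - 1) * 2 ^ ((3 - δ) / 2)) *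
          (Real.sqrt Real.pi / 2 / Real.sqrt (2 * Real.pi)) / Real.Gamma (δ / 2) := by
        rw [hexp, div_self hG3δ, hpow]; ring
    _ = x ^ (δ / 2 - 1) *
          ((2:ℝ) ^ ((3 - δ) / 2) * (Real.sqrt Real.pi / 2 / Real.sqrt (2 * Real.pi))) /
          Real.Gamma (δ / 2) := by ring
    _ = x ^ (δ / 2 - 1) / ((2 : ℝ) ^ (δ / 2) * Real.Gamma (δ / 2)) := by
        rw [h2]; ring
end
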